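/- Let s0 > 0. Then there exists a constant C (depending only on s0) such that for all s ≥ s0, ∫_{-∞}^{0} (Φ'(z-s) - Φ'(z))² / ( (Φ(z) - Φ(z-s)) · (Φ(-z) + Φ(z-s)) ) dz ≤ C. -/

import Mathlib

open MeasureTheory Real Set Filter

/-- The standard normal density `Φ'(z) = (1/√(2π)) e^{-z²/2}`. -/
noncomputable def Φ' (z : ℝ) : ℝ := (Real.sqrt (2 * Real.pi))⁻¹ * Real.exp (-z ^ 2 / 2)

/-- The standard normal cumulative distribution function `Φ`. -/
noncomputable def Φ (z : ℝ) : ℝ := ∫ u in Set.Iic z, Φ' u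

lemma Φ'_pos (z : ℝ) : 0 < Φ' z := by
  have : 0 < Real.sqrt (2 * Real.pi) := Real.sqrt_pos.2 (by positivity)
  exact mul_pos (inv_pos.2 this) (Real.exp_pos _)

lemma Φ'_cont : Continuous Φ' := by
  unfold Φ'
  fun_prop

lemma Φ'_int : Integrable Φ' := by
  have h : Integrable (fun x : ℝ => Real.exp (-(1/2 : ℝ) * x ^ 2)) :=
    integrable_exp_neg_mul_sq (by norm_num)
  have := h.const_mul (Real.sqrt (2 * Real.pi))⁻¹
  refine this.congr ?_
  filter_upwards with x
  unfold Φ'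
  ring_nf

lemma Φ'_mono_neg {a b : ℝ} (hab : a ≤ b) (hb : b ≤ 0) : Φ' a ≤ Φ' b := by
  unfold Φ'
  have h : Real.exp (-a ^ 2 / 2) ≤ Real.exp (-b ^ 2 / 2) := by
    apply Real.exp_le_exp.2; nlinarith
  have : (0:ℝ) ≤ (Real.sqrt (2 * Real.pi))⁻¹ := by positivity
  exact mul_le_mul_of_nonneg_left h this

lemma Φ_sub {a b : ℝ} (hab : a ≤ b) : Φ b - Φ a = ∫ u in Set.Ioc a b, Φ' u := by
  unfold Φ
  rw [intervalIntegral.integral_Iic_sub_Iic Φ'_int.integrableOn Φ'_int.integrableOn,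
    intervalIntegral.integral_of_le hab]

lemma Φ_mono : Monotone Φ := by
  intro a b hab
  have h := Φ_sub hab
  have h2 : 0 ≤ ∫ u in Set.Ioc a b, Φ' u :=
    setIntegral_nonneg measurableSet_Ioc fun x _ => (Φ'_pos x).le
  linarith

lemma Φ_nonneg (z : ℝ) : 0 ≤ Φ z :=
  setIntegral_nonneg measurableSet_Iic fun x _ => (Φ'_pos x).le

lemma Φ_sub_ge {z s t : ℝ} (hz : z ≤ 0) (ht : 0 < t) (hts : t ≤ s) :
    t * Φ' (z - t) ≤ Φ z - Φ (z - s) := by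
  have h1 : Φ (z - s) ≤ Φ (z - t) := Φ_mono (by linarith)
  have h2 : Φ z - Φ (z - t) = ∫ u in Set.Ioc (z - t) z, Φ' u := Φ_sub (by linarith)
  have h3 : ∫ u in Set.Ioc (z - t) z, (Φ' (z - t)) ≤ ∫ u in Set.Ioc (z - t) z, Φ' u := by
    refine setIntegral_mono_on (integrableOn_const (by simp) (by simp))
      Φ'_int.integrableOn measurableSet_Ioc fun x hx => ?_
    exact Φ'_mono_neg hx.1.le (hx.2.trans hz)
  rw [setIntegral_const] at h3
  simp only [Real.volume_Ioc, smul_eq_mul] at h3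
  rw [Real.volume_real_Ioc_of_le (by linarith)] at h3
  have : z - (z - t) = t := by ring
  rw [this] at h3
  linarith

lemma Φ_zero_pos : 0 < Φ 0 := by
  have h := Φ_sub_ge (le_refl (0:ℝ)) one_pos (le_refl 1)
  have := Φ_nonneg (0 - 1)
  have := Φ'_pos ((0:ℝ) - 1)
  nlinarith

/-- the integrals over `(-∞, 0)` are uniformly bounded for `s ≥ s0 > 0`. -/
theorem uniform_bound_Iio (s0 : ℝ) (hs0 : 0 < s0) :
    ∃ C : ℝ, ∀ s : ℝ, s0 ≤ s →
      IntegrableOn (fun z : ℝ =>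
        (Φ' (z - s) - Φ' z) ^ 2 / ((Φ z - Φ (z - s)) * (Φ (-z) + Φ (z - s))))
        (Set.Iio 0) volume ∧
      (∫ z in Set.Iio (0:ℝ),
        (Φ' (z - s) - Φ' z) ^ 2 / ((Φ z - Φ (z - s)) * (Φ (-z) + Φ (z - s)))) ≤ C := by
  -- the dominating function
  set K : ℝ := Real.exp (s0 ^ 2) * (Real.sqrt (2 * Real.pi))⁻¹ / (s0 * Φ 0) with hK
  set G : ℝ → ℝ := fun z => K * Real.exp (-(1/2 : ℝ) * (z + s0) ^ 2) with hG
  have hGint : Integrable G := by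
    have h : Integrable (fun x : ℝ => Real.exp (-(1/2 : ℝ) * x ^ 2)) :=
      integrable_exp_neg_mul_sq (by norm_num)
    exact (h.comp_sub_right (-s0)).const_mul K |>.congr (by
      filter_upwards with x
      simp [hG, sub_neg_eq_add])
  -- key pointwise identity
  have hkey : ∀ z : ℝ, (Φ' z) ^ 2 / (s0 * Φ' (z - s0) * Φ 0) = G z := by
    intro z
    have h1 : (Φ' z) ^ 2 = Φ' (z - s0) * ((Real.sqrt (2 * Real.pi))⁻¹ *
        (Real.exp (s0 ^ 2) * Real.exp (-(1/2 : ℝ) * (z + s0) ^ 2))) := by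
      have e : Real.exp (-z ^ 2 / 2) ^ 2 = Real.exp (-(z - s0) ^ 2 / 2) *
          (Real.exp (s0 ^ 2) * Real.exp (-(1/2 : ℝ) * (z + s0) ^ 2)) := by
        rw [sq, ← Real.exp_add, ← Real.exp_add, ← Real.exp_add]
        congr 1; ring
      unfold Φ'
      rw [mul_pow, e]; ring
    rw [h1, hG, hK]
    have h2 : Φ' (z - s0) ≠ 0 := (Φ'_pos _).ne'
    have h3 : Φ 0 ≠ 0 := Φ_zero_pos.ne'
    field_simp
  -- pointwise bound
  have hbound : ∀ s : ℝ, s0 ≤ s → ∀ z : ℝ, z < 0 →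
      (Φ' (z - s) - Φ' z) ^ 2 / ((Φ z - Φ (z - s)) * (Φ (-z) + Φ (z - s))) ≤ G z := by
    intro s hs z hz
    rw [← hkey z]
    have hnum : (Φ' (z - s) - Φ' z) ^ 2 ≤ (Φ' z) ^ 2 := by
      have h1 : Φ' (z - s) ≤ Φ' z := Φ'_mono_neg (by linarith) hz.le
      have h2 := Φ'_pos (z - s)
      nlinarith
    have hd1 : s0 * Φ' (z - s0) ≤ Φ z - Φ (z - s) := Φ_sub_ge hz.le hs0 hs
    have hd2 : Φ 0 ≤ Φ (-z) + Φ (z - s) := by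
      have := Φ_mono (by linarith : (0:ℝ) ≤ -z)
      have := Φ_nonneg (z - s)
      linarith
    have hdpos : 0 < s0 * Φ' (z - s0) * Φ 0 :=
      mul_pos (mul_pos hs0 (Φ'_pos _)) Φ_zero_pos
    have hdle : s0 * Φ' (z - s0) * Φ 0 ≤ (Φ z - Φ (z - s)) * (Φ (-z) + Φ (z - s)) := by
      have h1 : 0 < s0 * Φ' (z - s0) := mul_pos hs0 (Φ'_pos _)
      have := Φ_zero_pos
      nlinarith
    exact div_le_div₀ (sq_nonneg _) hnum hdpos hdle
  -- measurability
  have hmeas : ∀ s : ℝ, AEStronglyMeasurable (fun z : ℝ =>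
      (Φ' (z - s) - Φ' z) ^ 2 / ((Φ z - Φ (z - s)) * (Φ (-z) + Φ (z - s))))
      (volume.restrict (Set.Iio (0:ℝ))) := by
    intro s
    have hΦm : Measurable Φ := Φ_mono.measurable
    have h1 : Measurable fun z : ℝ => (Φ' (z - s) - Φ' z) ^ 2 :=
      (((Φ'_cont.comp (continuous_id.sub continuous_const)).sub Φ'_cont).pow 2).measurable
    have h2 : Measurable fun z : ℝ =>
        (Φ z - Φ (z - s)) * (Φ (-z) + Φ (z - s)) := by
      have ha : Measurable fun z : ℝ => Φ z := hΦm
      have hb : Measurable fun z : ℝ => Φ (z - s) := hΦm.comp (measurable_id.sub_const s)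
      have hc : Measurable fun z : ℝ => Φ (-z) := hΦm.comp measurable_neg
      exact ((ha.sub hb).mul (hc.add hb))
    exact (h1.div h2).aestronglyMeasurable
  refine ⟨∫ z in Set.Iio (0:ℝ), G z, fun s hs => ?_⟩
  have hfnonneg : ∀ z : ℝ, z < 0 →
      0 ≤ (Φ' (z - s) - Φ' z) ^ 2 / ((Φ z - Φ (z - s)) * (Φ (-z) + Φ (z - s))) := by
    intro z hz
    apply div_nonneg (sq_nonneg _)
    have hd1 : s0 * Φ' (z - s0) ≤ Φ z - Φ (z - s) := Φ_sub_ge hz.le hs0 hs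
    have hd2 : Φ 0 ≤ Φ (-z) + Φ (z - s) := by
      have := Φ_mono (by linarith : (0:ℝ) ≤ -z)
      have := Φ_nonneg (z - s)
      linarith
    have h1 : 0 < s0 * Φ' (z - s0) := mul_pos hs0 (Φ'_pos _)
    have := Φ_zero_pos
    nlinarith
  have hint : IntegrableOn (fun z : ℝ =>
      (Φ' (z - s) - Φ' z) ^ 2 / ((Φ z - Φ (z - s)) * (Φ (-z) + Φ (z - s))))
      (Set.Iio 0) volume := by
    refine Integrable.mono' hGint.integrableOn (hmeas s) ?_
    rw [ae_restrict_iff' measurableSet_Iio]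
    filter_upwards with z hz
    rw [Real.norm_eq_abs, abs_of_nonneg (hfnonneg z hz)]
    exact hbound s hs z hz
  refine ⟨hint, ?_⟩
  refine setIntegral_mono_on hint hGint.integrableOn measurableSet_Iio fun z hz =>
    hbound s hs z hz
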